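/- X₁ and X₂ are not homeomorphic topological spaces. -/
import Mathlib


open OnePoint

/-- Identifications `(0,0)∼(0,1)`, `(1,0)∼(2,0)`, `(1,1)∼(2,1)` on `S × Fin 2`. -/
def relEx3₁ : OnePoint ℂ × Fin 2 → OnePoint ℂ × Fin 2 → Prop := fun a b =>
  (a = (((0 : ℂ) : OnePoint ℂ), 0) ∧ b = (((0 : ℂ) : OnePoint ℂ), 1)) ∨
  (a = (((1 : ℂ) : OnePoint ℂ), 0) ∧ b = (((2 : ℂ) : OnePoint ℂ), 0)) ∨
  (a = (((1 : ℂ) : OnePoint ℂ), 1) ∧ b = (((2 : ℂ) : OnePoint ℂ), 1))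

/-- Identifications `(0,0)∼(0,1)`, `(1,0)∼(2,1)`, `(1,1)∼(2,0)` on `S × Fin 2`. -/
def relEx3₂ : OnePoint ℂ × Fin 2 → OnePoint ℂ × Fin 2 → Prop := fun a b =>
  (a = (((0 : ℂ) : OnePoint ℂ), 0) ∧ b = (((0 : ℂ) : OnePoint ℂ), 1)) ∨
  (a = (((1 : ℂ) : OnePoint ℂ), 0) ∧ b = (((2 : ℂ) : OnePoint ℂ), 1)) ∨
  (a = (((1 : ℂ) : OnePoint ℂ), 1) ∧ b = (((2 : ℂ) : OnePoint ℂ), 0))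

lemma eqvGen_rel1 {a b : OnePoint ℂ × Fin 2} :
    Relation.EqvGen relEx3₁ a b ↔ a = b ∨ relEx3₁ a b ∨ relEx3₁ b a := by
  constructor
  · intro h
    induction h with
    | rel a b h => exact Or.inr (Or.inl h)
    | refl a => exact Or.inl rfl
    | symm a b _ ih =>
      rcases ih with rfl | h | h
      · exact Or.inl rfl
      · exact Or.inr (Or.inr h)
      · exact Or.inr (Or.inl h)
    | trans a b c _ _ ih1 ih2 =>
      simp only [relEx3₁] at ih1 ih2 ⊢
      rcases ih1 with rfl | (⟨rfl,rfl⟩|⟨rfl,rfl⟩|⟨rfl,rfl⟩) | (⟨e1,rfl⟩|⟨e1,rfl⟩|⟨e1,rfl⟩) <;>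
        rcases ih2 with rfl | (⟨e2,rfl⟩|⟨e2,rfl⟩|⟨e2,rfl⟩) | (⟨e2,e3⟩|⟨e2,e3⟩|⟨e2,e3⟩) <;>
        simp_all [Prod.ext_iff, OnePoint.coe_eq_coe]
  · rintro (rfl | h | h)
    · exact Relation.EqvGen.refl _
    · exact Relation.EqvGen.rel _ _ h
    · exact (Relation.EqvGen.rel _ _ h).symm _ _

lemma eqvGen_rel2 {a b : OnePoint ℂ × Fin 2} :
    Relation.EqvGen relEx3₂ a b ↔ a = b ∨ relEx3₂ a b ∨ relEx3₂ b a := by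
  constructor
  · intro h
    induction h with
    | rel a b h => exact Or.inr (Or.inl h)
    | refl a => exact Or.inl rfl
    | symm a b _ ih =>
      rcases ih with rfl | h | h
      · exact Or.inl rfl
      · exact Or.inr (Or.inr h)
      · exact Or.inr (Or.inl h)
    | trans a b c _ _ ih1 ih2 =>
      simp only [relEx3₂] at ih1 ih2 ⊢
      rcases ih1 with rfl | (⟨rfl,rfl⟩|⟨rfl,rfl⟩|⟨rfl,rfl⟩) | (⟨e1,rfl⟩|⟨e1,rfl⟩|⟨e1,rfl⟩) <;>
        rcases ih2 with rfl | (⟨e2,rfl⟩|⟨e2,rfl⟩|⟨e2,rfl⟩) | (⟨e2,e3⟩|⟨e2,e3⟩|⟨e2,e3⟩) <;>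
        simp_all [Prod.ext_iff, OnePoint.coe_eq_coe]
  · rintro (rfl | h | h)
    · exact Relation.EqvGen.refl _
    · exact Relation.EqvGen.rel _ _ h
    · exact (Relation.EqvGen.rel _ _ h).symm _ _

lemma mk_eq_mk1 {a b : OnePoint ℂ × Fin 2} :
    Quot.mk relEx3₁ a = Quot.mk relEx3₁ b ↔ a = b ∨ relEx3₁ a b ∨ relEx3₁ b a := by
  rw [Quot.eq, eqvGen_rel1]

lemma mk_eq_mk2 {a b : OnePoint ℂ × Fin 2} :
    Quot.mk relEx3₂ a = Quot.mk relEx3₂ b ↔ a = b ∨ relEx3₂ a b ∨ relEx3₂ b a := by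
  rw [Quot.eq, eqvGen_rel2]

/-- The complement of a finite set in the Riemann sphere is connected. -/
lemma isConnected_compl_finite {F : Set (OnePoint ℂ)} (hF : F.Finite) :
    IsConnected Fᶜ := by
  set G : Set ℂ := ((↑) : ℂ → OnePoint ℂ) ⁻¹' F with hGdef
  have hGfin : G.Finite := hF.preimage (OnePoint.coe_injective.injOn)
  have hGc : IsConnected (Gᶜ : Set ℂ) :=
    Set.Countable.isConnected_compl_of_one_lt_rank
      (by rw [Complex.rank_real_complex]; norm_num) hGfin.countable
  have himg : IsConnected (((↑) : ℂ → OnePoint ℂ) '' Gᶜ) :=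
    hGc.image _ OnePoint.continuous_coe.continuousOn
  have hsub : ((↑) : ℂ → OnePoint ℂ) '' Gᶜ ⊆ Fᶜ := by
    rintro _ ⟨z, hz, rfl⟩
    exact hz
  have hcl : Fᶜ ⊆ closure (((↑) : ℂ → OnePoint ℂ) '' Gᶜ) := by
    intro x hx
    induction x using OnePoint.rec with
    | coe z => exact subset_closure ⟨z, hx, rfl⟩
    | infty =>
      rw [mem_closure_iff_nhds]
      intro U hU
      rw [OnePoint.nhds_infty_eq] at hU
      have hU1 : U ∈ Filter.map ((↑) : ℂ → OnePoint ℂ) (Filter.coclosedCompact ℂ) :=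
        Filter.mem_sup.1 hU |>.1
      rw [Filter.mem_map, Filter.hasBasis_coclosedCompact.mem_iff] at hU1
      obtain ⟨K, ⟨hKcl, hKco⟩, hKsub⟩ := hU1
      have hne : K ∪ G ≠ Set.univ := (hKco.union hGfin.isCompact).ne_univ
      obtain ⟨z, hz⟩ := Set.ne_univ_iff_exists_notMem _ |>.1 hne
      rw [Set.mem_union] at hz
      push_neg at hz
      exact ⟨(z : OnePoint ℂ), hKsub hz.1, ⟨z, hz.2, rfl⟩⟩
  exact ⟨himg.nonempty.mono hsub, himg.isPreconnected.subset_closure hsub hcl⟩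


/-- Removing the node `[(0,0)]` disconnects `X₁`. -/
lemma not_connected_X1 :
    ¬ IsConnected ({Quot.mk relEx3₁ (((0 : ℂ) : OnePoint ℂ), 0)}ᶜ :
      Set (Quot relEx3₁)) := by
  set c₀ : Quot relEx3₁ := Quot.mk relEx3₁ (((0 : ℂ) : OnePoint ℂ), 0) with hc₀
  set U : Fin 2 → Set (Quot relEx3₁) := fun i =>
    {q | ∃ s : OnePoint ℂ, s ≠ ((0 : ℂ) : OnePoint ℂ) ∧ q = Quot.mk relEx3₁ (s, i)}
    with hU
  have hpre : ∀ i, Quot.mk relEx3₁ ⁻¹' (U i) =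
      ({((0 : ℂ) : OnePoint ℂ)}ᶜ : Set (OnePoint ℂ)) ×ˢ ({i} : Set (Fin 2)) := by
    intro i
    ext ⟨t, j⟩
    simp only [hU, Set.mem_preimage, Set.mem_setOf_eq, Set.mem_prod, Set.mem_compl_iff,
      Set.mem_singleton_iff]
    constructor
    · rintro ⟨s, hs, h⟩
      rw [mk_eq_mk1] at h
      rcases h with h | h | h
      · injection h with h1 h2
        exact ⟨fun hh => hs (h1.symm.trans hh), h2⟩
      · simp only [relEx3₁, Prod.mk.injEq] at h
        rcases h with ⟨⟨rfl, rfl⟩, h2⟩ | ⟨⟨rfl, rfl⟩, h2⟩ | ⟨⟨rfl, rfl⟩, h2⟩ <;>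
          simp_all [OnePoint.coe_eq_coe]
      · simp only [relEx3₁, Prod.mk.injEq] at h
        rcases h with ⟨⟨rfl, rfl⟩, h2⟩ | ⟨⟨rfl, rfl⟩, h2⟩ | ⟨⟨rfl, rfl⟩, h2⟩ <;>
          simp_all [OnePoint.coe_eq_coe]
    · rintro ⟨ht, rfl⟩
      exact ⟨t, ht, rfl⟩
  have hopen : ∀ i, IsOpen (U i) := by
    intro i
    rw [← isQuotientMap_quot_mk.isOpen_preimage, hpre]
    exact (isOpen_compl_singleton).prod (isOpen_discrete _)
  rintro ⟨hne, hpc⟩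
  have hcover : ({c₀}ᶜ : Set (Quot relEx3₁)) ⊆ U 0 ∪ U 1 := by
    intro q hq
    induction q using Quot.ind with
    | _ x =>
      obtain ⟨s, j⟩ := x
      have hs : s ≠ ((0 : ℂ) : OnePoint ℂ) := by
        rintro rfl
        apply hq
        have hrel : Quot.mk relEx3₁ (((0 : ℂ) : OnePoint ℂ), 0) =
            Quot.mk relEx3₁ (((0 : ℂ) : OnePoint ℂ), 1) :=
          Quot.sound (Or.inl ⟨rfl, rfl⟩)
        fin_cases j
        · rfl
        · show Quot.mk relEx3₁ (((0 : ℂ) : OnePoint ℂ), 1) = c₀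
          rw [hc₀]
          exact hrel.symm
      fin_cases j
      · exact Or.inl ⟨s, hs, rfl⟩
      · exact Or.inr ⟨s, hs, rfl⟩
  have h10 : (Quot.mk relEx3₁ (((1 : ℂ) : OnePoint ℂ), 0)) ≠ c₀ := by
    intro h
    rw [hc₀, mk_eq_mk1] at h
    simp [relEx3₁, Prod.mk.injEq, OnePoint.coe_eq_coe] at h
  have h11 : (Quot.mk relEx3₁ (((1 : ℂ) : OnePoint ℂ), 1)) ≠ c₀ := by
    intro h
    rw [hc₀, mk_eq_mk1] at h
    simp [relEx3₁, Prod.mk.injEq, OnePoint.coe_eq_coe] at h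
  have hone : ((1 : ℂ) : OnePoint ℂ) ≠ ((0 : ℂ) : OnePoint ℂ) := by
    simp [OnePoint.coe_eq_coe]
  have hx0 : ({c₀}ᶜ ∩ U 0 : Set (Quot relEx3₁)).Nonempty :=
    ⟨Quot.mk relEx3₁ (((1 : ℂ) : OnePoint ℂ), 0), h10, ⟨_, hone, rfl⟩⟩
  have hx1 : ({c₀}ᶜ ∩ U 1 : Set (Quot relEx3₁)).Nonempty :=
    ⟨Quot.mk relEx3₁ (((1 : ℂ) : OnePoint ℂ), 1), h11, ⟨_, hone, rfl⟩⟩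
  obtain ⟨q, -, hq0, hq1⟩ := hpc (U 0) (U 1) (hopen 0) (hopen 1) hcover hx0 hx1
  obtain ⟨s, hs, rfl⟩ := hq0
  obtain ⟨t, ht, h⟩ := hq1
  rw [mk_eq_mk1] at h
  simp only [relEx3₁, Prod.mk.injEq, Prod.ext_iff, OnePoint.coe_eq_coe] at h
  rcases h with h | (h | h | h) | (h | h | h)
  · exact absurd h.2 (by decide)
  · exact hs h.1.1
  · exact absurd h.2.2 (by decide)
  · exact absurd h.1.2 (by decide)
  · exact absurd h.1.2 (by decide)
  · exact absurd h.1.2 (by decide)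
  · exact absurd h.2.2 (by decide)

/-- Removing any point of `X₂` leaves a connected space. -/
lemma connected_X2 (q : Quot relEx3₂) : IsConnected ({q}ᶜ : Set (Quot relEx3₂)) := by
  induction q using Quot.ind with
  | _ x =>
  obtain ⟨s, i⟩ := x
  set F : Fin 2 → Set (OnePoint ℂ) := fun j =>
    {t | Quot.mk relEx3₂ (t, j) = Quot.mk relEx3₂ (s, i)} with hF
  have hFfin : ∀ j, (F j).Finite := by
    intro j
    apply Set.Finite.subset
      (Set.toFinite {s, ((0 : ℂ) : OnePoint ℂ), ((1 : ℂ) : OnePoint ℂ),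
        ((2 : ℂ) : OnePoint ℂ)})
    intro t ht
    rw [hF, Set.mem_setOf_eq, mk_eq_mk2] at ht
    simp only [relEx3₂, Prod.mk.injEq, Prod.ext_iff] at ht
    rcases ht with ⟨h1, -⟩ | (⟨⟨h1, -⟩, -⟩ | ⟨⟨h1, -⟩, -⟩ | ⟨⟨h1, -⟩, -⟩) |
      (⟨-, h1, -⟩ | ⟨-, h1, -⟩ | ⟨-, h1, -⟩) <;> simp [h1]
  set A : Fin 2 → Set (Quot relEx3₂) := fun j =>
    Quot.mk relEx3₂ '' ((fun t => (t, j)) '' (F j)ᶜ) with hA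
  have hconn : ∀ j, IsConnected (A j) := by
    intro j
    exact (((isConnected_compl_finite (hFfin j)).image _
      ((continuous_id.prodMk continuous_const).continuousOn)).image _
      (continuous_quot_mk.continuousOn))
  have hsub : ∀ j, A j ⊆ ({Quot.mk relEx3₂ (s, i)}ᶜ : Set (Quot relEx3₂)) := by
    rintro j _ ⟨_, ⟨t, ht, rfl⟩, rfl⟩
    exact ht
  have hcover : ({Quot.mk relEx3₂ (s, i)}ᶜ : Set (Quot relEx3₂)) ⊆ A 0 ∪ A 1 := by
    intro y hy
    induction y using Quot.ind with
    | _ z =>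
      obtain ⟨t, j⟩ := z
      fin_cases j
      · exact Or.inl ⟨(t, 0), ⟨t, hy, rfl⟩, rfl⟩
      · exact Or.inr ⟨(t, 1), ⟨t, hy, rfl⟩, rfl⟩
  have heq : ({Quot.mk relEx3₂ (s, i)}ᶜ : Set (Quot relEx3₂)) = A 0 ∪ A 1 :=
    Set.Subset.antisymm hcover (Set.union_subset (hsub 0) (hsub 1))
  have hint : (A 0 ∩ A 1).Nonempty := by
    by_cases h0 : Quot.mk relEx3₂ (((0 : ℂ) : OnePoint ℂ), 0) = Quot.mk relEx3₂ (s, i)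
    · -- use the gluing (1,0) ∼ (2,1)
      have hglue : Quot.mk relEx3₂ (((1 : ℂ) : OnePoint ℂ), 0) =
          Quot.mk relEx3₂ (((2 : ℂ) : OnePoint ℂ), 1) :=
        Quot.sound (Or.inr (Or.inl ⟨rfl, rfl⟩))
      have hne10 : Quot.mk relEx3₂ (((1 : ℂ) : OnePoint ℂ), 0) ≠
          Quot.mk relEx3₂ (((0 : ℂ) : OnePoint ℂ), 0) := by
        intro h
        rw [mk_eq_mk2] at h
        simp [relEx3₂, Prod.mk.injEq, OnePoint.coe_eq_coe] at h
      have m1 : ((1 : ℂ) : OnePoint ℂ) ∉ F 0 := fun h => hne10 (h.trans h0.symm)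
      have m2 : ((2 : ℂ) : OnePoint ℂ) ∉ F 1 :=
        fun h => hne10 (hglue.trans (h.trans h0.symm))
      exact ⟨Quot.mk relEx3₂ (((1 : ℂ) : OnePoint ℂ), 0),
        ⟨(((1 : ℂ) : OnePoint ℂ), 0), ⟨_, m1, rfl⟩, rfl⟩,
        ⟨(((2 : ℂ) : OnePoint ℂ), 1), ⟨_, m2, rfl⟩, hglue.symm⟩⟩
    · -- use the gluing (0,0) ∼ (0,1)
      have hglue : Quot.mk relEx3₂ (((0 : ℂ) : OnePoint ℂ), 0) =
          Quot.mk relEx3₂ (((0 : ℂ) : OnePoint ℂ), 1) :=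
        Quot.sound (Or.inl ⟨rfl, rfl⟩)
      have m1 : ((0 : ℂ) : OnePoint ℂ) ∉ F 0 := h0
      have m2 : ((0 : ℂ) : OnePoint ℂ) ∉ F 1 := fun h => h0 (hglue.trans h)
      exact ⟨Quot.mk relEx3₂ (((0 : ℂ) : OnePoint ℂ), 0),
        ⟨(((0 : ℂ) : OnePoint ℂ), 0), ⟨_, m1, rfl⟩, rfl⟩,
        ⟨(((0 : ℂ) : OnePoint ℂ), 1), ⟨_, m2, rfl⟩, hglue.symm⟩⟩
  rw [heq]
  exact (hconn 0).union hint (hconn 1)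

/-- the quotients `X₁ = Quot relEx3₁` and `X₂ = Quot relEx3₂` are not
homeomorphic topological spaces. -/
theorem double_cover_statement_13 : ¬ Nonempty (Quot relEx3₁ ≃ₜ Quot relEx3₂) := by
  rintro ⟨h⟩
  set c₀ : Quot relEx3₁ := Quot.mk relEx3₁ (((0 : ℂ) : OnePoint ℂ), 0) with hc₀
  have h2 : IsConnected ({h c₀}ᶜ : Set (Quot relEx3₂)) := connected_X2 _
  have h1 : IsConnected ({c₀}ᶜ : Set (Quot relEx3₁)) := by
    have himg := h2.image h.symm h.symm.continuous.continuousOn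
    rwa [Set.image_compl_eq h.symm.bijective, Set.image_singleton,
      Homeomorph.symm_apply_apply] at himg
  exact not_connected_X1 h1
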